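/- Let (Θ, F, π) be a probability space and f₁ᵃ, g₁, g₂ : Θ → ℝ be measurable functions bounded in absolute value by 1. If moreover there is a measurable function f₁ᵇ¹ with |f₁ᵇ¹| ≤ 1 and g₁ = f₁ᵇ¹ π-almost everywhere (or g₁ = -f₁ᵇ¹ π-a.e.), then |∫ f₁ᵃ·g₁ dπ - ∫ f₁ᵃ·g₂ dπ| ≤ 1 ∓ ∫ f₁ᵇ¹·g₂ dπ (with minus sign for g₁ = f₁ᵇ¹ a.e. and plus sign for g₁ = -f₁ᵇ¹ a.e.). -/

import Mathlib

open MeasureTheory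

private lemma bell_key {Θ : Type*} [MeasurableSpace Θ]
    (π : Measure Θ) [IsProbabilityMeasure π]
    (f g₁ g₂ h : Θ → ℝ)
    (hfm : Measurable f) (hg₁m : Measurable g₁) (hg₂m : Measurable g₂)
    (hhm : Measurable h)
    (hf : ∀ θ, |f θ| ≤ 1) (hg₁ : ∀ θ, |g₁ θ| ≤ 1) (hg₂ : ∀ θ, |g₂ θ| ≤ 1)
    (hh : ∀ θ, |h θ| ≤ 1) (hae : g₁ =ᵐ[π] h) :
    |(∫ θ, f θ * g₁ θ ∂π) - ∫ θ, f θ * g₂ θ ∂π| ≤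
      1 - ∫ θ, h θ * g₂ θ ∂π := by
  have bint : ∀ (u v : Θ → ℝ), Measurable u → Measurable v →
      (∀ θ, |u θ| ≤ 1) → (∀ θ, |v θ| ≤ 1) → Integrable (fun θ => u θ * v θ) π := by
    intro u v hu hv hub hvb
    apply Integrable.mono' (integrable_const 1) ((hu.mul hv).aestronglyMeasurable)
    filter_upwards with θ
    rw [Pi.mul_apply, norm_mul]
    calc ‖u θ‖ * ‖v θ‖ ≤ 1 * 1 := by
          exact mul_le_mul (hub θ) (hvb θ) (norm_nonneg _) zero_le_one
      _ = 1 := one_mul 1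
  have i1 := bint f g₁ hfm hg₁m hf hg₁
  have i2 := bint f g₂ hfm hg₂m hf hg₂
  have i3 := bint h g₂ hhm hg₂m hh hg₂
  have idiff : Integrable (fun θ => g₁ θ - g₂ θ) π := by
    exact (bint g₁ (fun _ => 1) hg₁m measurable_const hg₁ (by simp)).congr
      (by filter_upwards with θ; simp) |>.sub
      ((bint g₂ (fun _ => 1) hg₂m measurable_const hg₂ (by simp)).congr
      (by filter_upwards with θ; simp))
  calc |(∫ θ, f θ * g₁ θ ∂π) - ∫ θ, f θ * g₂ θ ∂π|
      = |∫ θ, f θ * g₁ θ - f θ * g₂ θ ∂π| := by rw [integral_sub i1 i2]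
    _ ≤ ∫ θ, |f θ * g₁ θ - f θ * g₂ θ| ∂π := by
        simpa [Real.norm_eq_abs] using norm_integral_le_integral_norm (fun θ => f θ * g₁ θ - f θ * g₂ θ) (μ := π)
    _ ≤ ∫ θ, 1 - h θ * g₂ θ ∂π := by
        apply integral_mono_ae ((i1.sub i2).abs) ((integrable_const 1).sub i3)
        filter_upwards [hae] with θ hθ
        simp only [Pi.sub_apply]
        have : |f θ * g₁ θ - f θ * g₂ θ| = |f θ| * |g₁ θ - g₂ θ| := by
          rw [← abs_mul]; ring_nf
        rw [this, ← hθ]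
        calc |f θ| * |g₁ θ - g₂ θ| ≤ 1 * |g₁ θ - g₂ θ| := by
              exact mul_le_mul_of_nonneg_right (hf θ) (abs_nonneg _)
          _ = |g₁ θ - g₂ θ| := one_mul _
          _ ≤ 1 - g₁ θ * g₂ θ := by
              rcases abs_le.mp (hg₁ θ) with ⟨h1, h2⟩
              rcases abs_le.mp (hg₂ θ) with ⟨h3, h4⟩
              rw [abs_le]; constructor <;> nlinarith
    _ = 1 - ∫ θ, h θ * g₂ θ ∂π := by
        rw [integral_sub (integrable_const 1) i3]; simp

theorem bell_inequality_product {Θ : Type*} [MeasurableSpace Θ]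
    (π : Measure Θ) [IsProbabilityMeasure π]
    (f₁a g₁ g₂ f₁b₁ : Θ → ℝ)
    (hf₁am : Measurable f₁a) (hg₁m : Measurable g₁) (hg₂m : Measurable g₂)
    (hf₁b₁m : Measurable f₁b₁)
    (hf₁a : ∀ θ, |f₁a θ| ≤ 1) (hg₁ : ∀ θ, |g₁ θ| ≤ 1) (hg₂ : ∀ θ, |g₂ θ| ≤ 1)
    (hf₁b₁ : ∀ θ, |f₁b₁ θ| ≤ 1) :
    ((g₁ =ᵐ[π] f₁b₁) →
      |(∫ θ, f₁a θ * g₁ θ ∂π) - ∫ θ, f₁a θ * g₂ θ ∂π| ≤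
        1 - ∫ θ, f₁b₁ θ * g₂ θ ∂π) ∧
    ((g₁ =ᵐ[π] fun θ => -f₁b₁ θ) →
      |(∫ θ, f₁a θ * g₁ θ ∂π) - ∫ θ, f₁a θ * g₂ θ ∂π| ≤
        1 + ∫ θ, f₁b₁ θ * g₂ θ ∂π) := by
  constructor
  · intro hae
    exact bell_key π f₁a g₁ g₂ f₁b₁ hf₁am hg₁m hg₂m hf₁b₁m hf₁a hg₁ hg₂ hf₁b₁ hae
  · intro hae
    have key := bell_key π f₁a g₁ g₂ (fun θ => -f₁b₁ θ) hf₁am hg₁m hg₂m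
      hf₁b₁m.neg hf₁a hg₁ hg₂ (fun θ => by simpa using hf₁b₁ θ) hae
    have : (∫ θ, (fun θ => -f₁b₁ θ) θ * g₂ θ ∂π) = -∫ θ, f₁b₁ θ * g₂ θ ∂π := by
      simp [← integral_neg]
    rw [this] at key
    linarith
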